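/- Let 0 < γ < L and λ ∈ (0,1), and set r = √(1 − (γ/L)²). Then the quantity x = r(1−λ) / ( 2·(λ/(1+λ))·(γ/L − 1) + 1 + λ ) satisfies 0 < x < 1 (so that artanh(x) is well defined and positive), and consequently the minimum inter-event time τ_MIET = (1/(L·r))·artanh(x) is strictly positive. -/

import Mathlib

/-- The inverse hyperbolic tangent, `artanh x = ½ log((1+x)/(1-x))`,
well defined (as the inverse of `tanh`) for `x ∈ (-1, 1)`. -/
noncomputable def Real.artanhLog (x : ℝ) : ℝ := (1 / 2) * Real.log ((1 + x) / (1 - x))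

/-- For `0 < γ < L` and `λ ∈ (0,1)`, with `r = √(1 - (γ/L)²)`, the
argument `x = r(1-λ) / (2(λ/(1+λ))(γ/L - 1) + 1 + λ)` satisfies `0 < x < 1`
(so `artanh x` is well defined and positive), and `τ_MIET = (1/(L·r))·artanh x > 0`. -/
theorem miet_positive_lt_case
    (L γ lam : ℝ) (hγ : 0 < γ) (hγL : γ < L) (hlam : lam ∈ Set.Ioo (0 : ℝ) 1)
    (r : ℝ) (hr : r = Real.sqrt (1 - (γ / L) ^ 2)) :
    (0 < r * (1 - lam) / (2 * (lam / (1 + lam)) * (γ / L - 1) + 1 + lam) ∧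
      r * (1 - lam) / (2 * (lam / (1 + lam)) * (γ / L - 1) + 1 + lam) < 1) ∧
    0 < (1 / (L * r)) *
      Real.artanhLog (r * (1 - lam) / (2 * (lam / (1 + lam)) * (γ / L - 1) + 1 + lam)) := by
  obtain ⟨hl0, hl1⟩ := hlam
  have hL : 0 < L := hγ.trans hγL
  have hc0 : 0 < γ / L := div_pos hγ hL
  have hc1 : γ / L < 1 := (div_lt_one hL).mpr hγL
  have h1c : 0 < 1 - (γ / L) ^ 2 := by nlinarith
  have hr0 : 0 < r := hr ▸ Real.sqrt_pos.mpr h1c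
  have hr1 : r < 1 := by
    rw [hr]
    exact (Real.sqrt_lt' one_pos).mpr (by nlinarith)
  have hlp : 0 < 1 + lam := by linarith
  have key : 2 * (lam / (1 + lam)) * (γ / L - 1) + 1 + lam - (1 - lam)
      = 2 * lam * (γ / L + lam) / (1 + lam) := by field_simp; ring
  have hkp : 0 < 2 * lam * (γ / L + lam) / (1 + lam) := by positivity
  have hden : 1 - lam < 2 * (lam / (1 + lam)) * (γ / L - 1) + 1 + lam := by linarith
  have hD : 0 < 2 * (lam / (1 + lam)) * (γ / L - 1) + 1 + lam := by linarith
  have hx0 : 0 < r * (1 - lam) / (2 * (lam / (1 + lam)) * (γ / L - 1) + 1 + lam) :=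
    div_pos (mul_pos hr0 (by linarith)) hD
  have hx1 : r * (1 - lam) / (2 * (lam / (1 + lam)) * (γ / L - 1) + 1 + lam) < 1 := by
    rw [div_lt_one hD]
    nlinarith
  refine ⟨⟨hx0, hx1⟩, ?_⟩
  apply mul_pos (by positivity)
  unfold Real.artanhLog
  apply mul_pos (by norm_num)
  apply Real.log_pos
  rw [one_lt_div (by linarith)]
  linarith
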